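/- arXiv:1808.09760 — 3 statements merged into one kernel-verified Lean document; each statement's English description precedes it below -/
import Mathlib

section
/- Let ν ∈ {1,−1}, z₀ ∈ F_N(ℝ²), and suppose Z(t) = exp(−νtJ_N)z₀ solves the whole-plane system M_Γ ż = J_N ∇H₀(z). Then: (i) every constant function t ↦ â with â ∈ D, the function t ↦ Ż(t), and the function t ↦ Z(t) − 2tŻ(t) solve the linearized equation v̇ = M_Γ⁻¹J_N∇²H₀(Z(t))v; (ii) consequently the fundamental solution X₀ (X₀'(t)=M_Γ⁻¹J_N∇²H₀(Z(t))X₀(t), X₀(0)=Id) satisfies, for all t ∈ ℝ and â ∈ D: X₀(t)â = â, X₀(t)(J_N z₀) = exp(−νtJ_N) J_N z₀, and X₀(t) z₀ = exp(−νtJ_N)(z₀ + 2tν J_N z₀). -/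
noncomputable section

open Real Set Asymptotics Polynomial Function
open scoped Topology
open scoped BigOperators RealInnerProductSpace

/-- The plane `ℝ²`. -/
abbrev V2 : Type := EuclideanSpace ℝ (Fin 2)

def mkV2 (f : Fin 2 → ℝ) : V2 := WithLp.toLp 2 f

/-- Phase space `ℝ^{2N}` of `N` planar points. -/
abbrev Ph (N : ℕ) : Type := EuclideanSpace ℝ (Fin N × Fin 2)

def mkPh {N : ℕ} (f : Fin N × Fin 2 → ℝ) : Ph N := WithLp.toLp 2 f

/-- The `j`-th planar component `z_j` of `z ∈ ℝ^{2N}`. -/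
def comp2 {N : ℕ} (z : Ph N) (j : Fin N) : V2 := mkV2 fun i => z (j, i)

/-- The collision-free configuration set `F_N(ℝ²)`. -/
def FNset (N : ℕ) : Set (Ph N) :=
  {z | ∀ j k : Fin N, j ≠ k → comp2 z j ≠ comp2 z k}

/-- The diagonal vector `â = (a,…,a) ∈ ℝ^{2N}`. -/
def diagPh (N : ℕ) (a : V2) : Ph N := mkPh fun p => a p.2

/-- The diagonal subspace `D = {(a,…,a)} ⊂ ℝ^{2N}`. -/
def Dset (N : ℕ) : Set (Ph N) := {z | ∃ a : V2, z = diagPh N a}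

/-- The matrix `J = [[0,1],[−1,0]]` (rotation by `−π/2`). -/
def Jmat : Matrix (Fin 2) (Fin 2) ℝ := !![0, 1; -1, 0]

/-- `J` as a linear map on `ℝ²`. -/
def J2 : V2 →L[ℝ] V2 :=
  LinearMap.toContinuousLinearMap (Matrix.toEuclideanLin Jmat)

/-- The block diagonal matrix `J_N = diag(J,…,J)`. -/
def JNmat (N : ℕ) : Matrix (Fin N × Fin 2) (Fin N × Fin 2) ℝ :=
  fun p q => if p.1 = q.1 then Jmat p.2 q.2 else 0

/-- `J_N` as a linear map on `ℝ^{2N}`. -/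
def JN (N : ℕ) : Ph N →L[ℝ] Ph N :=
  LinearMap.toContinuousLinearMap (Matrix.toEuclideanLin (JNmat N))

/-- `M_Γ = diag(Γ₁,Γ₁,…,Γ_N,Γ_N)` as a linear map on `ℝ^{2N}`. -/
def MG (N : ℕ) (Γv : Fin N → ℝ) : Ph N →L[ℝ] Ph N :=
  LinearMap.toContinuousLinearMap
    (Matrix.toEuclideanLin (Matrix.diagonal fun p : Fin N × Fin 2 => Γv p.1))

/-- `M_Γ⁻¹` as a linear map on `ℝ^{2N}`. -/
def MGinv (N : ℕ) (Γv : Fin N → ℝ) : Ph N →L[ℝ] Ph N :=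
  LinearMap.toContinuousLinearMap
    (Matrix.toEuclideanLin (Matrix.diagonal fun p : Fin N × Fin 2 => (Γv p.1)⁻¹))

/-- Total vorticity `Γ = Σ Γ_j`. -/
def Gtot (N : ℕ) (Γv : Fin N → ℝ) : ℝ := ∑ j, Γv j

/-- Total vortex angular momentum `L = Σ_{j<k} Γ_jΓ_k`. -/
def Lmom (N : ℕ) (Γv : Fin N → ℝ) : ℝ :=
  ∑ j : Fin N, ∑ k : Fin N, if j < k then Γv j * Γv k else 0

/-- The whole-plane Hamiltonian `H₀`. -/
def H0 (N : ℕ) (Γv : Fin N → ℝ) (z : Ph N) : ℝ :=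
  -(1 / (2 * π)) * ∑ j : Fin N, ∑ k : Fin N,
    if j ≠ k then Γv j * Γv k * Real.log ‖comp2 z j - comp2 z k‖ else 0

/-- The Hessian of a function, as a continuous linear map. -/
def hessOf {E : Type*} [NormedAddCommGroup E] [InnerProductSpace ℝ E] [CompleteSpace E]
    (f : E → ℝ) (x : E) : E →L[ℝ] E :=
  fderiv ℝ (gradient f) x

/-- The vector field `M_Γ⁻¹ J_N ∇H` of the Hamiltonian system `M_Γ ż = J_N ∇H(z)`. -/
def vf (N : ℕ) (Γv : Fin N → ℝ) (H : Ph N → ℝ) (z : Ph N) : Ph N :=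
  MGinv N Γv (JN N (gradient H z))

/-- The linearization `A(t) = M_Γ⁻¹ J_N ∇²H(z)` of the vector field along `z`. -/
def linA (N : ℕ) (Γv : Fin N → ℝ) (H : Ph N → ℝ) (z : Ph N) : Ph N →L[ℝ] Ph N :=
  (MGinv N Γv) ∘L (JN N) ∘L (hessOf H z)

/-- `exp(−νt J_N)`. -/
def expJN (N : ℕ) (ν t : ℝ) : Ph N →L[ℝ] Ph N :=
  NormedSpace.exp ((-(ν * t)) • JN N)

/-- The rigidly rotating configuration `Z(t) = exp(−νt J_N) z₀`. -/
def Zrel (N : ℕ) (ν : ℝ) (z0 : Ph N) (t : ℝ) : Ph N := expJN N ν t z0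

/-- The matrix of an endomorphism of `ℝ^{2N}` in the standard basis. -/
def matOf {N : ℕ} (T : Ph N →L[ℝ] Ph N) : Matrix (Fin N × Fin 2) (Fin N × Fin 2) ℝ :=
  Matrix.toEuclideanLin.symm T.toLinearMap

/-- The characteristic polynomial over `ℂ` of a real endomorphism of `ℝ^{2N}`;
its roots are the complex eigenvalues. -/
def cpC {N : ℕ} (T : Ph N →L[ℝ] Ph N) : Polynomial ℂ :=
  ((matOf T).charpoly).map (algebraMap ℝ ℂ)

/-- The interaction energy `F(z) = Σ_{j,k} Γ_jΓ_k g(z_j,z_k)`. -/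
def Fint (N : ℕ) (Γv : Fin N → ℝ) (g : V2 → V2 → ℝ) (z : Ph N) : ℝ :=
  ∑ j : Fin N, ∑ k : Fin N, Γv j * Γv k * g (comp2 z j) (comp2 z k)

/-- The rescaled Hamiltonian `H_r(u) = H₀(u) − F(ru) + F(0)`. -/
def Hr (N : ℕ) (Γv : Fin N → ℝ) (g : V2 → V2 → ℝ) (r : ℝ) (u : Ph N) : ℝ :=
  H0 N Γv u - Fint N Γv g (r • u) + Fint N Γv g 0


/-- The `N`-vortex Hamiltonian on a domain `Ω` with Green's-function regular part `g`. -/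
def HOm (N : ℕ) (Γv : Fin N → ℝ) (g : V2 → V2 → ℝ) (z : Ph N) : ℝ :=
  (∑ j : Fin N, ∑ k : Fin N,
    if j ≠ k then
      Γv j * Γv k *
        (-(1 / (2 * π)) * Real.log ‖comp2 z j - comp2 z k‖ - g (comp2 z j) (comp2 z k))
    else 0)
  - ∑ j : Fin N, (Γv j) ^ 2 * g (comp2 z j) (comp2 z j)

section Aux
variable {N : ℕ}

@[simp] lemma comp2_apply (z : Ph N) (j : Fin N) (i : Fin 2) : comp2 z j i = z (j, i) := rfl

/-- projection onto `j`-th planar component, as a CLM. -/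
def projC (N : ℕ) (j : Fin N) : Ph N →L[ℝ] V2 :=
  LinearMap.toContinuousLinearMap
    { toFun := fun z => comp2 z j
      map_add' := fun _ _ => rfl
      map_smul' := fun _ _ => rfl }

@[simp] lemma projC_apply (j : Fin N) (z : Ph N) : projC N j z = comp2 z j := rfl

/-- difference of planar components, as a CLM. -/
def DC (N : ℕ) (j k : Fin N) : Ph N →L[ℝ] V2 := projC N j - projC N k

@[simp] lemma DC_apply (j k : Fin N) (z : Ph N) : DC N j k z = comp2 z j - comp2 z k := rfl

lemma JN_apply (z : Ph N) (j : Fin N) (i : Fin 2) :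
    JN N z (j, i) = if i = 0 then z (j, 1) else -z (j, 0) := by
  show Matrix.toEuclideanLin (JNmat N) z (j, i) = _
  rw [Matrix.toEuclideanLin_apply]
  show ((JNmat N).mulVec fun q => z q) (j, i) = _
  simp only [Matrix.mulVec, dotProduct, JNmat, Fintype.sum_prod_type, ite_mul, zero_mul]
  rw [Finset.sum_eq_single j]
  · fin_cases i <;> simp [Jmat, Fin.sum_univ_two]
  · intro k _ hk; simp [Ne.symm hk]
  · simp

lemma MG_apply (Γv : Fin N → ℝ) (z : Ph N) (p : Fin N × Fin 2) :
    MG N Γv z p = Γv p.1 * z p := by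
  show Matrix.toEuclideanLin _ z p = _
  rw [Matrix.toEuclideanLin_apply]
  show ((Matrix.diagonal _).mulVec fun q => z q) p = _
  simp [Matrix.mulVec_diagonal]

lemma MGinv_apply (Γv : Fin N → ℝ) (z : Ph N) (p : Fin N × Fin 2) :
    MGinv N Γv z p = (Γv p.1)⁻¹ * z p := by
  show Matrix.toEuclideanLin _ z p = _
  rw [Matrix.toEuclideanLin_apply]
  show ((Matrix.diagonal _).mulVec fun q => z q) p = _
  simp [Matrix.mulVec_diagonal]

lemma J2_apply (w : V2) (i : Fin 2) : J2 w i = if i = 0 then w 1 else -w 0 := by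
  show Matrix.toEuclideanLin Jmat w i = _
  rw [Matrix.toEuclideanLin_apply]
  show (Jmat.mulVec fun q => w q) i = _
  fin_cases i <;>
    simp [Matrix.mulVec, dotProduct, Jmat, Fin.sum_univ_two, Matrix.vecHead,
      Matrix.vecTail]

lemma JN_JN (z : Ph N) : JN N (JN N z) = -z := by
  ext p
  obtain ⟨j, i⟩ := p
  have : (-z) (j,i) = -(z (j,i)) := rfl
  rw [this]
  fin_cases i <;> simp [JN_apply]

lemma MG_JN (Γv : Fin N → ℝ) (z : Ph N) : MG N Γv (JN N z) = JN N (MG N Γv z) := by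
  ext p
  obtain ⟨j, i⟩ := p
  fin_cases i <;> simp [JN_apply, MG_apply]

lemma MG_MGinv (Γv : Fin N → ℝ) (hΓ : ∀ j, Γv j ≠ 0) (z : Ph N) :
    MG N Γv (MGinv N Γv z) = z := by
  ext p
  rw [MG_apply, MGinv_apply, mul_inv_cancel_left₀ (hΓ p.1)]

lemma MGinv_MG (Γv : Fin N → ℝ) (hΓ : ∀ j, Γv j ≠ 0) (z : Ph N) :
    MGinv N Γv (MG N Γv z) = z := by
  ext p
  rw [MGinv_apply, MG_apply, inv_mul_cancel_left₀ (hΓ p.1)]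

lemma DC_JN (j k : Fin N) (z : Ph N) : DC N j k (JN N z) = J2 (DC N j k z) := by
  ext i
  have h1 : ∀ (w : Ph N) (i : Fin 2), (comp2 w j - comp2 w k) i = w (j, i) - w (k, i) :=
    fun _ _ => rfl
  rw [DC_apply, h1, J2_apply]
  fin_cases i <;> simp [JN_apply, h1] <;> ring

lemma inner_J2_self (w : V2) : ⟪J2 w, w⟫ = 0 := by
  rw [PiLp.inner_apply]
  simp [Fin.sum_univ_two, J2_apply]
  ring
end Aux
set_option synthInstance.maxHeartbeats 1000000

section Exp
variable {N : ℕ}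

lemma expJN_eq (ν t : ℝ) : expJN N ν t = NormedSpace.exp (t • ((-ν) • JN N)) := by
  unfold expJN
  congr 1
  rw [smul_smul]
  ring_nf

lemma expJN_comm_JN (ν t : ℝ) (z : Ph N) :
    expJN N ν t (JN N z) = JN N (expJN N ν t z) := by
  rw [expJN_eq]
  have hc : Commute (t • ((-ν) • JN N)) (JN N) := by
    show _ * _ = _ * _
    ext1 z
    simp
  have h := hc.exp_left.eq
  calc NormedSpace.exp (t • (-ν) • JN N) (JN N z)
      = (NormedSpace.exp (t • (-ν) • JN N) * JN N) z := rfl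
    _ = (JN N * NormedSpace.exp (t • (-ν) • JN N)) z := by rw [h]
    _ = _ := rfl

lemma Zrel_zero (ν : ℝ) (z0 : Ph N) : Zrel N ν z0 0 = z0 := by
  have h0 : (-(ν * 0)) • JN N = (0 : Ph N →L[ℝ] Ph N) := by
    rw [show (-(ν * 0)) = (0 : ℝ) by ring]
    ext1 z
    simp
  rw [Zrel, expJN, h0, NormedSpace.exp_zero]
  rfl

lemma hasDerivAt_Zrel (ν : ℝ) (z0 : Ph N) (t : ℝ) :
    HasDerivAt (Zrel N ν z0) ((-ν) • JN N (Zrel N ν z0 t)) t := by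
  have h := hasDerivAt_exp_smul_const (𝕂 := ℝ) ((-ν) • JN N) t
  have h2 : HasDerivAt (fun u : ℝ => NormedSpace.exp (u • ((-ν) • JN N)) z0)
      ((NormedSpace.exp (t • ((-ν) • JN N)) * ((-ν) • JN N)) z0) t := by
    simpa using h.clm_apply (hasDerivAt_const t z0)
  have h3 : (fun u : ℝ => NormedSpace.exp (u • ((-ν) • JN N)) z0) = Zrel N ν z0 := by
    funext u
    rw [Zrel, expJN_eq]
  rw [h3] at h2
  convert h2 using 1
  rw [ContinuousLinearMap.mul_apply, ContinuousLinearMap.smul_apply, map_smul,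
    ← expJN_eq, expJN_comm_JN]
  rfl

lemma Zrel_mem_FNset (ν : ℝ) (z0 : Ph N) (hz0 : z0 ∈ FNset N) (t : ℝ) :
    Zrel N ν z0 t ∈ FNset N := by
  intro j k hjk
  rw [← sub_ne_zero, ← DC_apply]
  set f : ℝ → V2 := fun s => DC N j k (Zrel N ν z0 s) with hfdef
  have hf : ∀ s, HasDerivAt f ((-ν) • J2 (f s)) s := by
    intro s
    have h := (DC N j k).hasFDerivAt.comp_hasDerivAt s (hasDerivAt_Zrel ν z0 s)
    rw [map_smul, DC_JN] at h
    exact h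
  have hg : ∀ s, HasDerivAt (fun s => (⟪f s, f s⟫ : ℝ)) 0 s := by
    intro s
    have h := (hf s).inner ℝ (hf s)
    have e1 : (⟪f s, (-ν) • J2 (f s)⟫ : ℝ) + ⟪(-ν) • J2 (f s), f s⟫ = 0 := by
      rw [real_inner_smul_right, real_inner_smul_left, real_inner_comm,
        inner_J2_self]
      ring
    rwa [e1] at h
  have hconst : (fun s => (⟪f s, f s⟫ : ℝ)) = fun _ => ⟪f 0, f 0⟫ := by
    funext s
    exact is_const_of_deriv_eq_zero (fun s => (hg s).differentiableAt)
      (fun s => (hg s).deriv) s 0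
  intro hzero
  have hft : f t = 0 := hzero
  have h0 : f 0 ≠ 0 := by
    rw [hfdef]
    simp only [Zrel_zero, DC_apply]
    rw [sub_ne_zero]
    exact hz0 j k hjk
  have hc := congrFun hconst t
  rw [hft, inner_zero_left] at hc
  exact h0 (by rwa [eq_comm, inner_self_eq_zero] at hc)
end Exp
section Smooth
variable {N : ℕ} {Γv : Fin N → ℝ}

lemma FNset_open : IsOpen (FNset N) := by
  have h : FNset N = ⋂ (j : Fin N) (k : Fin N) (_ : j ≠ k), {z : Ph N | DC N j k z ≠ 0} := by
    ext z
    simp only [FNset, Set.mem_setOf_eq, Set.mem_iInter, DC_apply, sub_ne_zero]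
  rw [h]
  refine isOpen_iInter_of_finite fun j => isOpen_iInter_of_finite fun k =>
    isOpen_iInter_of_finite fun _ => ?_
  exact isOpen_compl_singleton.preimage (DC N j k).continuous

lemma H0_contDiffOn : ContDiffOn ℝ 2 (H0 N Γv) (FNset N) := by
  intro z hz
  apply ContDiffAt.contDiffWithinAt
  unfold H0
  apply ContDiffAt.mul contDiffAt_const
  apply ContDiffAt.sum
  intro j _
  apply ContDiffAt.sum
  intro k _
  rcases eq_or_ne j k with h | h
  · have e : (fun z : Ph N =>
        if j ≠ k then Γv j * Γv k * Real.log ‖comp2 z j - comp2 z k‖ else 0)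
        = fun _ => 0 := by
      funext w; simp [h]
    rw [e]
    exact contDiffAt_const
  · have e : (fun z : Ph N =>
        if j ≠ k then Γv j * Γv k * Real.log ‖comp2 z j - comp2 z k‖ else 0)
        = fun z => Γv j * Γv k * Real.log ‖DC N j k z‖ := by
      funext w; simp [h]
    rw [e]
    have hne : DC N j k z ≠ 0 := by
      rw [DC_apply, sub_ne_zero]; exact hz j k h
    apply ContDiffAt.mul contDiffAt_const
    exact (Real.contDiffAt_log.2 (norm_ne_zero_iff.2 hne)).comp z
      (((DC N j k).contDiff.contDiffAt).norm ℝ hne)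

lemma H0_diffAt {z : Ph N} (hz : z ∈ FNset N) : DifferentiableAt ℝ (H0 N Γv) z :=
  ((H0_contDiffOn.contDiffAt (FNset_open.mem_nhds hz)).differentiableAt
    (by norm_num))

lemma grad_contDiffOn : ContDiffOn ℝ 1 (gradient (H0 N Γv)) (FNset N) := by
  have h1 : ContDiffOn ℝ 1 (fderiv ℝ (H0 N Γv)) (FNset N) :=
    H0_contDiffOn.fderiv_of_isOpen FNset_open (by norm_num)
  have h2 : gradient (H0 N Γv)
      = fun x => (InnerProductSpace.toDual ℝ (Ph N)).symm (fderiv ℝ (H0 N Γv) x) := rfl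
  rw [h2]
  exact ((InnerProductSpace.toDual ℝ (Ph N)).symm.contDiff).comp_contDiffOn h1

lemma grad_diffAt {z : Ph N} (hz : z ∈ FNset N) :
    DifferentiableAt ℝ (gradient (H0 N Γv)) z :=
  (grad_contDiffOn.contDiffAt (FNset_open.mem_nhds hz)).differentiableAt one_ne_zero

lemma hess_contOn : ContinuousOn (hessOf (H0 N Γv)) (FNset N) :=
  grad_contDiffOn.continuousOn_fderiv_of_isOpen FNset_open le_rfl

lemma comp2_sub_translate (z : Ph N) (a : V2) (j k : Fin N) :
    comp2 (z + diagPh N a) j - comp2 (z + diagPh N a) k = comp2 z j - comp2 z k := by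
  ext i
  show (z (j, i) + a i) - (z (k, i) + a i) = z (j, i) - z (k, i)
  ring

lemma H0_translate (z : Ph N) (a : V2) : H0 N Γv (z + diagPh N a) = H0 N Γv z := by
  unfold H0
  simp only [comp2_sub_translate]

lemma FNset_translate {z : Ph N} (hz : z ∈ FNset N) (a : V2) :
    z + diagPh N a ∈ FNset N := by
  intro j k hjk
  rw [← sub_ne_zero, comp2_sub_translate, sub_ne_zero]
  exact hz j k hjk

lemma grad_translate {z : Ph N} (hz : z ∈ FNset N) (a : V2) :
    gradient (H0 N Γv) (z + diagPh N a) = gradient (H0 N Γv) z := by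
  have hz' : z + diagPh N a ∈ FNset N := FNset_translate hz a
  have hd : DifferentiableAt ℝ (H0 N Γv) (z + diagPh N a) := H0_diffAt hz'
  have h1 : HasFDerivAt (fun w => H0 N Γv (w + diagPh N a))
      (fderiv ℝ (H0 N Γv) (z + diagPh N a)) z := by
    have := hd.hasFDerivAt.comp z ((hasFDerivAt_id z).add_const (diagPh N a))
    exact this
  have h2 : (fun w => H0 N Γv (w + diagPh N a)) = H0 N Γv :=
    funext fun w => H0_translate w a
  rw [h2] at h1
  show (InnerProductSpace.toDual ℝ (Ph N)).symm (fderiv ℝ (H0 N Γv) (z + diagPh N a))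
    = (InnerProductSpace.toDual ℝ (Ph N)).symm (fderiv ℝ (H0 N Γv) z)
  rw [h1.fderiv]

lemma smul_diagPh (s : ℝ) (a : V2) : s • diagPh N a = diagPh N (s • a) := rfl

lemma hess_diag {z : Ph N} (hz : z ∈ FNset N) (a : V2) :
    hessOf (H0 N Γv) z (diagPh N a) = 0 := by
  have hc : HasDerivAt (fun s : ℝ => z + s • diagPh N a) (diagPh N a) 0 := by
    simpa using ((hasDerivAt_id (0 : ℝ)).smul_const (diagPh N a)).const_add z
  have hc0 : z + (0 : ℝ) • diagPh N a = z := by simp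
  have h1 : HasDerivAt (fun s : ℝ => gradient (H0 N Γv) (z + s • diagPh N a))
      (hessOf (H0 N Γv) z (diagPh N a)) 0 := by
    have hG : HasFDerivAt (gradient (H0 N Γv)) (hessOf (H0 N Γv) z)
        ((fun s : ℝ => z + s • diagPh N a) 0) := by
      rw [show (fun s : ℝ => z + s • diagPh N a) 0 = z by simpa using hc0]
      exact (grad_diffAt hz).hasFDerivAt
    exact hG.comp_hasDerivAt 0 hc
  have h2 : (fun s : ℝ => gradient (H0 N Γv) (z + s • diagPh N a))
      = fun _ => gradient (H0 N Γv) z := by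
    funext s
    rw [smul_diagPh, grad_translate hz]
  rw [h2] at h1
  exact h1.unique (hasDerivAt_const 0 _)

lemma FNset_smul {z : Ph N} (hz : z ∈ FNset N) {c : ℝ} (hc : c ≠ 0) :
    c • z ∈ FNset N := by
  intro j k hjk
  rw [← sub_ne_zero]
  have e : comp2 (c • z) j - comp2 (c • z) k = c • (comp2 z j - comp2 z k) := by
    ext i
    show c * z (j, i) - c * z (k, i) = c * (z (j, i) - z (k, i))
    ring
  rw [e]
  exact smul_ne_zero hc (sub_ne_zero.2 (hz j k hjk))

lemma H0_scale {z : Ph N} (hz : z ∈ FNset N) {c : ℝ} (hc : 0 < c) :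
    H0 N Γv (c • z) = H0 N Γv z
      + (-(1 / (2 * π)) * ∑ j : Fin N, ∑ k : Fin N, if j ≠ k then Γv j * Γv k else 0)
        * Real.log c := by
  unfold H0
  have key : ∀ j k : Fin N,
      (if j ≠ k then Γv j * Γv k * Real.log ‖comp2 (c • z) j - comp2 (c • z) k‖ else 0)
      = (if j ≠ k then Γv j * Γv k * Real.log ‖comp2 z j - comp2 z k‖ else 0)
        + (if j ≠ k then Γv j * Γv k else 0) * Real.log c := by
    intro j k
    rcases eq_or_ne j k with h | h
    · simp [h]
    · have e : comp2 (c • z) j - comp2 (c • z) k = c • (comp2 z j - comp2 z k) := by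
        ext i
        show c * z (j, i) - c * z (k, i) = c * (z (j, i) - z (k, i))
        ring
      have hne : comp2 z j - comp2 z k ≠ 0 := sub_ne_zero.2 (hz j k h)
      rw [e, if_pos h, if_pos h, if_pos h, norm_smul, Real.norm_eq_abs, abs_of_pos hc,
        Real.log_mul hc.ne' (norm_ne_zero_iff.2 hne)]
      ring
  simp only [key, Finset.sum_add_distrib, ← Finset.sum_mul]
  ring

lemma grad_scale {z : Ph N} (hz : z ∈ FNset N) {c : ℝ} (hc : 0 < c) :
    gradient (H0 N Γv) (c • z) = c⁻¹ • gradient (H0 N Γv) z := by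
  set C : ℝ := (-(1 / (2 * π)) * ∑ j : Fin N, ∑ k : Fin N, if j ≠ k then Γv j * Γv k else 0)
    * Real.log c with hC
  have hz' : c • z ∈ FNset N := FNset_smul hz hc.ne'
  have h1 : HasFDerivAt (fun w => H0 N Γv (c • w))
      ((fderiv ℝ (H0 N Γv) (c • z)).comp (c • ContinuousLinearMap.id ℝ (Ph N))) z :=
    (H0_diffAt hz').hasFDerivAt.comp z ((hasFDerivAt_id z).const_smul c)
  have h2 : (fun w => H0 N Γv (c • w)) =ᶠ[nhds z] fun w => H0 N Γv w + C := by
    filter_upwards [FNset_open.mem_nhds hz] with w hw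
    exact H0_scale hw hc
  have h3 : HasFDerivAt (fun w => H0 N Γv w + C) (fderiv ℝ (H0 N Γv) z) z :=
    (H0_diffAt hz).hasFDerivAt.add_const C
  have h4 := h3.congr_of_eventuallyEq h2
  have h5 := h1.unique h4
  have h6 : fderiv ℝ (H0 N Γv) (c • z) = c⁻¹ • fderiv ℝ (H0 N Γv) z := by
    ext w
    have := congrArg (fun L : Ph N →L[ℝ] ℝ => L (c⁻¹ • w)) h5
    simp only [ContinuousLinearMap.coe_comp', Function.comp_apply,
      ContinuousLinearMap.smul_apply, ContinuousLinearMap.coe_id', id_eq,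
      smul_smul, mul_inv_cancel₀ hc.ne', one_smul] at this
    simpa [map_smul] using this
  show (InnerProductSpace.toDual ℝ (Ph N)).symm (fderiv ℝ (H0 N Γv) (c • z)) = _
  rw [h6, map_smul]
  rfl

lemma hess_self {z : Ph N} (hz : z ∈ FNset N) :
    hessOf (H0 N Γv) z z = -(gradient (H0 N Γv) z) := by
  have hc : HasDerivAt (fun s : ℝ => s • z) z 1 := by
    simpa using (hasDerivAt_id (1 : ℝ)).smul_const z
  have h1 : HasDerivAt (fun s : ℝ => gradient (H0 N Γv) (s • z))
      (hessOf (H0 N Γv) z z) 1 := by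
    have hG : HasFDerivAt (gradient (H0 N Γv)) (hessOf (H0 N Γv) z)
        ((fun s : ℝ => s • z) 1) := by
      rw [show (fun s : ℝ => s • z) 1 = z by simp]
      exact (grad_diffAt hz).hasFDerivAt
    exact hG.comp_hasDerivAt 1 hc
  have h2 : (fun s : ℝ => gradient (H0 N Γv) (s • z))
      =ᶠ[nhds 1] fun s : ℝ => s⁻¹ • gradient (H0 N Γv) z := by
    filter_upwards [isOpen_Ioi.mem_nhds (show (0:ℝ) < 1 by norm_num)] with s hs
    exact grad_scale hz hs
  have h3 : HasDerivAt (fun s : ℝ => s⁻¹ • gradient (H0 N Γv) z)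
      (-(gradient (H0 N Γv) z)) 1 := by
    have h := (hasDerivAt_inv (one_ne_zero : (1:ℝ) ≠ 0)).smul_const (gradient (H0 N Γv) z)
    have e : (-(((1:ℝ) ^ 2)⁻¹)) • gradient (H0 N Γv) z = -(gradient (H0 N Γv) z) := by
      norm_num
    rwa [e] at h
  exact h1.unique (h3.congr_of_eventuallyEq h2)
end Smooth
section ODE
lemma linear_ODE_unique {E : Type*} [NormedAddCommGroup E] [NormedSpace ℝ E]
    (A : ℝ → E →L[ℝ] E) (hA : Continuous A) {f g : ℝ → E}
    (hf : ∀ t, HasDerivAt f (A t (f t)) t) (hg : ∀ t, HasDerivAt g (A t (g t)) t)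
    (h0 : f 0 = g 0) (t : ℝ) : f t = g t := by
  set a : ℝ := -(|t| + 1) with ha
  set b : ℝ := |t| + 1 with hb
  have hab : a < b := by
    have : (0:ℝ) < |t| + 1 := by positivity
    rw [ha, hb]; linarith
  have ht0 : (0:ℝ) ∈ Set.Ioo a b := by
    constructor
    · rw [ha]; have := abs_nonneg t; linarith
    · rw [hb]; have := abs_nonneg t; linarith
  have htmem : t ∈ Set.Icc a b := by
    constructor
    · rw [ha]; have := neg_abs_le t; linarith
    · rw [hb]; have := le_abs_self t; linarith
  obtain ⟨C, hC⟩ := isCompact_Icc.exists_bound_of_continuousOn (hA.continuousOn (s := Set.Icc a b))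
  set K : NNReal := ⟨max C 0, le_max_right _ _⟩ with hK
  set v : ℝ → E → E := fun s x => A (max a (min s b)) x with hv
  have hvL : ∀ s : ℝ, LipschitzOnWith K (v s) Set.univ := by
    intro s
    have hmem : max a (min s b) ∈ Set.Icc a b :=
      ⟨le_max_left _ _, max_le hab.le (min_le_right _ _)⟩
    refine ((A (max a (min s b))).lipschitz.weaken ?_).lipschitzOnWith
    rw [← NNReal.coe_le_coe]
    exact le_trans (hC _ hmem) (le_max_left _ _)
  have hproj : ∀ s ∈ Set.Ioo a b, max a (min s b) = s := by
    intro s hs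
    rw [min_eq_left hs.2.le, max_eq_right hs.1.le]
  have heq := ODE_solution_unique_of_mem_Icc (v := v) (s := fun _ => (Set.univ : Set E))
    (K := K) (fun s _ => hvL s) ht0
    (fun s _ => (hf s).continuousAt.continuousWithinAt)
    (fun s hs => by rw [hv]; simp only; rw [hproj s hs]; exact hf s)
    (fun _ _ => Set.mem_univ _)
    (fun s _ => (hg s).continuousAt.continuousWithinAt)
    (fun s hs => by rw [hv]; simp only; rw [hproj s hs]; exact hg s)
    (fun _ _ => Set.mem_univ _) h0
  exact heq htmem
end ODE
/-- Floquet solutions of the linearization along a relative equilibrium `Z(t)`: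
the constants `â ∈ D`, `Ż(t) = −νJ_N Z(t)` and `Z(t) − 2tŻ(t)` solve
`v̇ = M_Γ⁻¹J_N∇²H₀(Z(t))v`; consequently the fundamental solution `X₀` satisfies
`X₀(t)â = â`, `X₀(t)J_Nz₀ = exp(−νtJ_N)J_Nz₀` and
`X₀(t)z₀ = exp(−νtJ_N)(z₀ + 2tν J_Nz₀)`. -/
theorem floquet_solutions_relative_equilibrium (N : ℕ) (hN : 2 ≤ N)
    (Γv : Fin N → ℝ) (hΓ : ∀ j, Γv j ≠ 0) (ν : ℝ) (hν : ν = 1 ∨ ν = -1)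
    (z0 : Ph N) (hz0 : z0 ∈ FNset N)
    (hsol : ∀ t : ℝ, HasDerivAt (Zrel N ν z0) (vf N Γv (H0 N Γv) (Zrel N ν z0 t)) t) :
    (∀ (a : V2) (t : ℝ), HasDerivAt (fun _ : ℝ => diagPh N a)
        (linA N Γv (H0 N Γv) (Zrel N ν z0 t) (diagPh N a)) t) ∧
    (∀ t : ℝ, HasDerivAt (fun s : ℝ => (-ν) • JN N (Zrel N ν z0 s))
        (linA N Γv (H0 N Γv) (Zrel N ν z0 t) ((-ν) • JN N (Zrel N ν z0 t))) t) ∧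
    (∀ t : ℝ, HasDerivAt
        (fun s : ℝ => Zrel N ν z0 s - (2 * s) • ((-ν) • JN N (Zrel N ν z0 s)))
        (linA N Γv (H0 N Γv) (Zrel N ν z0 t)
          (Zrel N ν z0 t - (2 * t) • ((-ν) • JN N (Zrel N ν z0 t)))) t) ∧
    (∀ X : ℝ → Ph N →L[ℝ] Ph N, X 0 = 1 →
      (∀ t : ℝ, HasDerivAt X (linA N Γv (H0 N Γv) (Zrel N ν z0 t) ∘L X t) t) →
      ∀ t : ℝ,
        (∀ a : V2, X t (diagPh N a) = diagPh N a) ∧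
        X t (JN N z0) = expJN N ν t (JN N z0) ∧
        X t z0 = expJN N ν t (z0 + (2 * t * ν) • JN N z0)) := by
  have hν1 : ν ≠ 0 := by rcases hν with h | h <;> rw [h] <;> norm_num
  have hν2 : ν * ν = 1 := by rcases hν with h | h <;> rw [h] <;> norm_num
  set Z := Zrel N ν z0 with hZdef
  have hZF : ∀ t, Z t ∈ FNset N := Zrel_mem_FNset ν z0 hz0
  have hZd : ∀ t, HasDerivAt Z ((-ν) • JN N (Z t)) t := hasDerivAt_Zrel ν z0
  -- the relative equilibrium identity ∇H₀(Z t) = -ν • M_Γ (Z t)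
  have hkey1 : ∀ t, gradient (H0 N Γv) (Z t) = (-ν) • MG N Γv (Z t) := by
    intro t
    have h1 : vf N Γv (H0 N Γv) (Z t) = (-ν) • JN N (Z t) := (hsol t).unique (hZd t)
    have h2 : JN N (gradient (H0 N Γv) (Z t)) = MG N Γv ((-ν) • JN N (Z t)) := by
      rw [← h1]
      show JN N (gradient (H0 N Γv) (Z t))
        = MG N Γv (MGinv N Γv (JN N (gradient (H0 N Γv) (Z t))))
      rw [MG_MGinv Γv hΓ]
    have h3 := congrArg (JN N) h2
    rw [JN_JN] at h3
    have h4 : JN N (MG N Γv ((-ν) • JN N (Z t))) = (-ν) • -(MG N Γv (Z t)) := by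
      rw [map_smul, map_smul, ← MG_JN, JN_JN, map_neg]
    rw [h4, smul_neg] at h3
    exact neg_injective h3
  -- Hessian applied to J_N Z
  have hkey2 : ∀ t, hessOf (H0 N Γv) (Z t) (JN N (Z t))
      = (-ν) • MG N Γv (JN N (Z t)) := by
    intro t
    have hGZ : HasDerivAt (fun s => gradient (H0 N Γv) (Z s))
        (hessOf (H0 N Γv) (Z t) ((-ν) • JN N (Z t))) t :=
      (grad_diffAt (hZF t)).hasFDerivAt.comp_hasDerivAt t (hZd t)
    have h2' : (fun s => gradient (H0 N Γv) (Z s)) = fun s => (-ν) • MG N Γv (Z s) :=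
      funext fun s => hkey1 s
    rw [h2'] at hGZ
    have hMZ : HasDerivAt (fun s => (-ν) • MG N Γv (Z s))
        ((-ν) • MG N Γv ((-ν) • JN N (Z t))) t := by
      have := (MG N Γv).hasFDerivAt.comp_hasDerivAt t (hZd t)
      exact this.const_smul (-ν)
    have huniq := hGZ.unique hMZ
    rw [map_smul, map_smul, smul_smul] at huniq
    have h7 : (-ν) * (-ν) = 1 := by rw [neg_mul_neg, hν2]
    rw [h7, one_smul] at huniq
    calc hessOf (H0 N Γv) (Z t) (JN N (Z t))
        = ((-ν) * (-ν)) • hessOf (H0 N Γv) (Z t) (JN N (Z t)) := by rw [h7, one_smul]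
      _ = (-ν) • ((-ν) • hessOf (H0 N Γv) (Z t) (JN N (Z t))) := by rw [smul_smul]
      _ = (-ν) • MG N Γv (JN N (Z t)) := by rw [huniq]
  -- Hessian applied to Z
  have hkey3 : ∀ t, hessOf (H0 N Γv) (Z t) (Z t) = ν • MG N Γv (Z t) := by
    intro t
    rw [hess_self (hZF t), hkey1 t, ← neg_smul, neg_neg]
  have linA_app : ∀ t (x : Ph N), linA N Γv (H0 N Γv) (Z t) x
      = MGinv N Γv (JN N (hessOf (H0 N Γv) (Z t) x)) := fun _ _ => rfl
  have hA1 : ∀ (t : ℝ) (a : V2), linA N Γv (H0 N Γv) (Z t) (diagPh N a) = 0 := by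
    intro t a
    rw [linA_app, hess_diag (hZF t), map_zero, map_zero]
  have hA2 : ∀ t, linA N Γv (H0 N Γv) (Z t) (JN N (Z t)) = ν • Z t := by
    intro t
    simp only [linA_app, hkey2 t, map_smul, map_neg, ← MG_JN, JN_JN,
      MGinv_MG Γv hΓ]
    module
  have hA3 : ∀ t, linA N Γv (H0 N Γv) (Z t) (Z t) = ν • JN N (Z t) := by
    intro t
    simp only [linA_app, hkey3 t, map_smul, ← MG_JN, MGinv_MG Γv hΓ]
  -- part (i)
  have part1 : ∀ (a : V2) (t : ℝ), HasDerivAt (fun _ : ℝ => diagPh N a)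
      (linA N Γv (H0 N Γv) (Z t) (diagPh N a)) t := by
    intro a t
    rw [hA1 t a]
    exact hasDerivAt_const t _
  have part2 : ∀ t : ℝ, HasDerivAt (fun s : ℝ => (-ν) • JN N (Z s))
      (linA N Γv (H0 N Γv) (Z t) ((-ν) • JN N (Z t))) t := by
    intro t
    have hd : HasDerivAt (fun s : ℝ => (-ν) • JN N (Z s))
        ((-ν) • JN N ((-ν) • JN N (Z t))) t :=
      ((JN N).hasFDerivAt.comp_hasDerivAt t (hZd t)).const_smul (-ν)
    convert hd using 1
    simp only [map_smul, hA2 t, JN_JN, map_neg]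
    module
  have part3 : ∀ t : ℝ, HasDerivAt
      (fun s : ℝ => Z s - (2 * s) • ((-ν) • JN N (Z s)))
      (linA N Γv (H0 N Γv) (Z t) (Z t - (2 * t) • ((-ν) • JN N (Z t)))) t := by
    intro t
    have hc2 : HasDerivAt (fun s : ℝ => 2 * s) 2 t := by
      simpa using (hasDerivAt_id t).const_mul (2:ℝ)
    have hw : HasDerivAt (fun s : ℝ => (-ν) • JN N (Z s))
        ((-ν) • JN N ((-ν) • JN N (Z t))) t :=
      ((JN N).hasFDerivAt.comp_hasDerivAt t (hZd t)).const_smul (-ν)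
    have hd := (hZd t).sub (hc2.smul hw)
    refine hd.congr_deriv ?_
    simp only [map_sub, map_smul, map_neg, hA3 t, hA2 t, JN_JN]
    module
  refine ⟨part1, part2, part3, ?_⟩
  -- part (ii)
  intro X hX0 hXd t
  have hAcont : Continuous fun s => linA N Γv (H0 N Γv) (Z s) := by
    have hZcont : Continuous Z := by
      rw [continuous_iff_continuousAt]
      exact fun s => (hZd s).continuousAt
    have hhessZ : Continuous fun s => hessOf (H0 N Γv) (Z s) :=
      hess_contOn.comp_continuous hZcont hZF
    have h1 : Continuous fun s =>
        (ContinuousLinearMap.compL ℝ (Ph N) (Ph N) (Ph N)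
          ((MGinv N Γv).comp (JN N))) (hessOf (H0 N Γv) (Z s)) :=
      (ContinuousLinearMap.continuous _).comp hhessZ
    have h2 : (fun s =>
        (ContinuousLinearMap.compL ℝ (Ph N) (Ph N) (Ph N)
          ((MGinv N Γv).comp (JN N))) (hessOf (H0 N Γv) (Z s)))
        = fun s => linA N Γv (H0 N Γv) (Z s) := by
      funext s
      ext w
      rfl
    rwa [h2] at h1
  have hXu : ∀ (x : Ph N) (s : ℝ), HasDerivAt (fun r => X r x)
      (linA N Γv (H0 N Γv) (Z s) (X s x)) s := by
    intro x s
    have := (hXd s).clm_apply (hasDerivAt_const s x)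
    simpa using this
  have hX0' : ∀ x : Ph N, X 0 x = x := by
    intro x
    rw [hX0]
    rfl
  refine ⟨?_, ?_, ?_⟩
  · -- diagonal vectors
    intro a
    exact linear_ODE_unique _ hAcont (hXu (diagPh N a))
      (fun s => part1 a s) (by rw [hX0' (diagPh N a)]) t
  · -- J_N z0
    have hgd : ∀ s, HasDerivAt (fun r => JN N (Z r))
        (linA N Γv (H0 N Γv) (Z s) (JN N (Z s))) s := by
      intro s
      have hd := (JN N).hasFDerivAt.comp_hasDerivAt s (hZd s)
      refine hd.congr_deriv ?_
      simp only [hA2 s, map_smul, map_neg, JN_JN]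
      module
    have h := linear_ODE_unique _ hAcont (hXu (JN N z0)) hgd
      (by rw [hX0' (JN N z0)]; show JN N z0 = JN N (Z 0); rw [hZdef, Zrel_zero]) t
    rw [h]
    show JN N (Z t) = expJN N ν t (JN N z0)
    rw [expJN_comm_JN]
    rfl
  · -- z0
    have hgz0 : Z 0 - (2 * (0:ℝ)) • ((-ν) • JN N (Z 0)) = z0 := by
      rw [hZdef, Zrel_zero]
      simp
    have h := linear_ODE_unique _ hAcont (hXu z0) part3
      (by rw [hX0' z0, ← hgz0]) t
    rw [h]
    show Z t - (2 * t) • ((-ν) • JN N (Z t)) = expJN N ν t (z0 + (2 * t * ν) • JN N z0)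
    rw [map_add, map_smul, expJN_comm_JN]
    show Z t - (2 * t) • ((-ν) • JN N (Z t)) = Z t + (2 * t * ν) • JN N (Z t)
    rw [smul_smul]
    match_scalars <;> ring

end
end

section
/- Let Ω ⊂ ℝ² be open, g ∈ C²(Ω×Ω) with g(x,y) = g(y,x), F : Ω^N → ℝ, F(z) = Σ_{j,k=1}^N Γ_jΓ_k g(z_j,z_k), and h(x) = g(x,x). Then for every a ∈ Ω and every b ∈ ℝ², the Hessian of F at â = (a,…,a) applied to b̂ = (b,…,b) satisfies ∇²F(â)·b̂ = Γ M_Γ (∇²h(a)b, …, ∇²h(a)b); i.e. for every w ∈ ℝ^{2N}, D²F(â)[b̂,w] = Γ Σ_{j=1}^N Γ_j ⟨∇²h(a)b, w_j⟩. -/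
noncomputable section

open Real Set Asymptotics Polynomial Function
open scoped Topology
open scoped BigOperators RealInnerProductSpace

section HessAux
variable {ι : Type*} [Fintype ι] [DecidableEq ι]

lemma gradient_coord (f : EuclideanSpace ℝ ι → ℝ) (x : EuclideanSpace ℝ ι) (p : ι) :
    gradient f x p = fderiv ℝ f x (EuclideanSpace.single p 1) := by
  have h1 : (fderiv ℝ f x) (EuclideanSpace.single p 1)
      = inner (𝕜 := ℝ) (gradient f x) (EuclideanSpace.single p 1) := by
    rw [gradient]
    exact (InnerProductSpace.toDual_symm_apply).symm
  rw [h1, EuclideanSpace.inner_single_right]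
  simp

omit [DecidableEq ι] in
lemma grad_diff (f : EuclideanSpace ℝ ι → ℝ) (x : EuclideanSpace ℝ ι)
    (hf : ContDiffAt ℝ 2 f x) : DifferentiableAt ℝ (gradient f) x := by
  have h1 : DifferentiableAt ℝ (fderiv ℝ f) x :=
    (hf.fderiv_right (m := 1) (by norm_num)).differentiableAt one_ne_zero
  have h : gradient f = fun y =>
      (InnerProductSpace.toDual ℝ (EuclideanSpace ℝ ι)).symm (fderiv ℝ f y) := rfl
  rw [h]
  exact ((InnerProductSpace.toDual ℝ
    (EuclideanSpace ℝ ι)).symm.toContinuousLinearEquiv.differentiable.differentiableAt).comp x h1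

lemma hess_coord (f : EuclideanSpace ℝ ι → ℝ) (x : EuclideanSpace ℝ ι)
    (hf : DifferentiableAt ℝ (gradient f) x) (w : EuclideanSpace ℝ ι) (p : ι) :
    fderiv ℝ (gradient f) x w p
      = fderiv ℝ (fun z => fderiv ℝ f z (EuclideanSpace.single p 1)) x w := by
  have h := ((EuclideanSpace.proj (𝕜 := ℝ) p).hasFDerivAt.comp x hf.hasFDerivAt).fderiv
  have h2 : (⇑(EuclideanSpace.proj (𝕜 := ℝ) p) ∘ gradient f)
      = fun z => fderiv ℝ f z (EuclideanSpace.single p 1) := by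
    funext z; exact gradient_coord f z p
  calc fderiv ℝ (gradient f) x w p
      = ((EuclideanSpace.proj (𝕜 := ℝ) p).comp (fderiv ℝ (gradient f) x)) w := rfl
    _ = fderiv ℝ (⇑(EuclideanSpace.proj (𝕜 := ℝ) p) ∘ gradient f) x w := by rw [h]
    _ = _ := by rw [h2]

end HessAux

/-- the `j`-th projection as a continuous linear map. -/
def projV {N : ℕ} (j : Fin N) : Ph N →L[ℝ] V2 :=
  LinearMap.toContinuousLinearMap
    { toFun := fun z => comp2 z j
      map_add' := fun _ _ => rfl
      map_smul' := fun _ _ => by ext; simp [comp2, mkV2] }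

lemma projV_apply {N : ℕ} (j : Fin N) (z : Ph N) : projV j z = comp2 z j := by
  simp [projV]; rfl

/-- the pair projection `z ↦ (z_j, z_k)`. -/
def Pjk {N : ℕ} (j k : Fin N) : Ph N →L[ℝ] (V2 × V2) := (projV j).prod (projV k)

lemma Pjk_apply {N : ℕ} (j k : Fin N) (z : Ph N) : Pjk j k z = (comp2 z j, comp2 z k) := rfl

lemma comp2_single {N : ℕ} (l j : Fin N) (i : Fin 2) :
    comp2 (EuclideanSpace.single ((l, i) : Fin N × Fin 2) (1:ℝ)) j
      = if j = l then EuclideanSpace.single i (1:ℝ) else 0 := by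
  ext i'
  by_cases h : j = l
  · subst h
    simp [comp2, mkV2, EuclideanSpace.single_apply, Prod.ext_iff]
  · simp [comp2, mkV2, EuclideanSpace.single_apply, Prod.ext_iff, h]

/-- Hessian of the interaction energy on the diagonal applied to a diagonal vector:
`∇²F(â)·b̂ = Γ M_Γ (∇²h(a)b,…,∇²h(a)b)`. -/
theorem hessian_Fint_diag (N : ℕ) (hN : 2 ≤ N) (Γv : Fin N → ℝ)
    (hΓ : ∀ j, Γv j ≠ 0) (Ω : Set V2) (hΩ : IsOpen Ω) (g : V2 → V2 → ℝ)
    (hg : ContDiffOn ℝ 2 (fun p : V2 × V2 => g p.1 p.2) (Ω ×ˢ Ω))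
    (hgsym : ∀ x ∈ Ω, ∀ y ∈ Ω, g x y = g y x) (a : V2) (ha : a ∈ Ω) (b : V2) :
    hessOf (Fint N Γv g) (diagPh N a) (diagPh N b) =
      mkPh fun p => Gtot N Γv * Γv p.1 * hessOf (fun x => g x x) a b p.2 := by
  classical
  set G : V2 × V2 → ℝ := fun q => g q.1 q.2 with hGdef
  have hUopen : IsOpen (Ω ×ˢ Ω) := hΩ.prod hΩ
  have hGat : ∀ q ∈ Ω ×ˢ Ω, ContDiffAt ℝ 2 G q := fun q hq =>
    hg.contDiffAt (hUopen.mem_nhds hq)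
  have haa : ((a, a) : V2 × V2) ∈ Ω ×ˢ Ω := ⟨ha, ha⟩
  set D : (V2 × V2) →L[ℝ] (V2 × V2) →L[ℝ] ℝ := fderiv ℝ (fderiv ℝ G) (a, a) with hDdef
  have hD : HasFDerivAt (fderiv ℝ G) D (a, a) :=
    (((hGat _ haa).fderiv_right (m := 1) (by norm_num)).differentiableAt one_ne_zero).hasFDerivAt
  set S : Set (Ph N) := ⋂ j : Fin N, (projV j) ⁻¹' Ω with hSdef
  have hSopen : IsOpen S :=
    isOpen_iInter_of_finite fun j => hΩ.preimage (projV j).continuous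
  have hmemS : ∀ z, z ∈ S ↔ ∀ j, comp2 z j ∈ Ω := by
    intro z; simp [hSdef, projV_apply]
  have haS : diagPh N a ∈ S := (hmemS _).2 fun j => ha
  have hFeq : Fint N Γv g = fun z => ∑ j : Fin N, ∑ k : Fin N, Γv j * Γv k * G (Pjk j k z) := rfl
  have hFderiv : ∀ z ∈ S, HasFDerivAt (Fint N Γv g)
      (∑ j : Fin N, ∑ k : Fin N,
        (Γv j * Γv k) • ((fderiv ℝ G (Pjk j k z)).comp (Pjk j k))) z := by
    intro z hz
    rw [hFeq]
    apply HasFDerivAt.fun_sum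
    intro j _
    apply HasFDerivAt.fun_sum
    intro k _
    have hmem : Pjk j k z ∈ Ω ×ˢ Ω := ⟨(hmemS z).1 hz j, (hmemS z).1 hz k⟩
    exact ((((hGat _ hmem).differentiableAt (by norm_num)).hasFDerivAt).comp z
      (Pjk j k).hasFDerivAt).const_mul _
  have hFc : ContDiffAt ℝ 2 (Fint N Γv g) (diagPh N a) := by
    rw [hFeq]
    apply ContDiffAt.sum
    intro j _
    apply ContDiffAt.sum
    intro k _
    have h1 : ContDiffAt ℝ 2 (G ∘ (Pjk j k)) (diagPh N a) :=
      ContDiffAt.comp (f := ⇑(Pjk j k)) (diagPh N a) (hGat _ haa)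
        (Pjk j k).contDiff.contDiffAt
    exact contDiffAt_const.mul h1
  have hgradF : DifferentiableAt ℝ (gradient (Fint N Γv g)) (diagPh N a) :=
    grad_diff _ _ hFc
  -- single-vortex side
  have hhc : ContDiffAt ℝ 2 (fun x : V2 => g x x) a := by
    have hΔc : ContDiffAt ℝ 2 (fun x : V2 => ((x, x) : V2 × V2)) a :=
      (contDiff_id.prodMk contDiff_id).contDiffAt
    exact ContDiffAt.comp (g := G) (f := fun x : V2 => ((x, x) : V2 × V2)) a
      (hGat _ haa) hΔc
  have hgradh : DifferentiableAt ℝ (gradient (fun x : V2 => g x x)) a :=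
    grad_diff _ _ hhc
  set Δ : V2 →L[ℝ] V2 × V2 :=
    (ContinuousLinearMap.id ℝ V2).prod (ContinuousLinearMap.id ℝ V2) with hΔdef
  ext p
  obtain ⟨l, i⟩ := p
  set ei : V2 := EuclideanSpace.single i (1:ℝ) with heidef
  -- compute hessOf h a b i
  have hhside : hessOf (fun x : V2 => g x x) a b i = D (b, b) (ei, ei) := by
    rw [hessOf, hess_coord _ _ hgradh]
    have hEv2 : (fun x : V2 => fderiv ℝ (fun x : V2 => g x x) x (EuclideanSpace.single i 1))
        =ᶠ[nhds a] fun x : V2 => fderiv ℝ G (Δ x) (Δ (EuclideanSpace.single i 1)) := by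
      filter_upwards [hΩ.mem_nhds ha] with x hx
      have hder : HasFDerivAt (fun x : V2 => g x x) ((fderiv ℝ G (Δ x)).comp Δ) x :=
        HasFDerivAt.comp (f := ⇑Δ) x
          (((hGat (x, x) ⟨hx, hx⟩).differentiableAt (by norm_num)).hasFDerivAt)
          Δ.hasFDerivAt
      rw [hder.fderiv]
      rfl
    rw [hEv2.fderiv_eq]
    have h2 : HasFDerivAt (fun x : V2 => fderiv ℝ G (Δ x) (Δ (EuclideanSpace.single i 1)))
        (((ContinuousLinearMap.apply ℝ ℝ (Δ (EuclideanSpace.single i 1))).comp D).comp Δ) a :=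
      (ContinuousLinearMap.apply ℝ ℝ (Δ (EuclideanSpace.single i 1))).hasFDerivAt.comp a
        (HasFDerivAt.comp (f := ⇑Δ) a hD Δ.hasFDerivAt)
    rw [h2.fderiv]
    rfl
  -- compute LHS
  set w0 : Ph N := EuclideanSpace.single ((l, i) : Fin N × Fin 2) (1:ℝ) with hw0def
  have hEv : (fun z => fderiv ℝ (Fint N Γv g) z w0) =ᶠ[nhds (diagPh N a)]
      (fun z => ∑ j : Fin N, ∑ k : Fin N,
        Γv j * Γv k * (fderiv ℝ G (Pjk j k z)) (Pjk j k w0)) := by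
    filter_upwards [hSopen.mem_nhds haS] with z hz
    rw [(hFderiv z hz).fderiv]
    simp [ContinuousLinearMap.sum_apply, ContinuousLinearMap.smul_apply, smul_eq_mul]
  have hterm : ∀ j k : Fin N, HasFDerivAt
      (fun z : Ph N => (fderiv ℝ G (Pjk j k z)) (Pjk j k w0))
      (((ContinuousLinearMap.apply ℝ ℝ (Pjk j k w0)).comp D).comp (Pjk j k)) (diagPh N a) :=
    fun j k =>
      (ContinuousLinearMap.apply ℝ ℝ (Pjk j k w0)).hasFDerivAt.comp _
        (HasFDerivAt.comp (f := ⇑(Pjk j k)) _ hD (Pjk j k).hasFDerivAt)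
  have hsum : HasFDerivAt
      (fun z : Ph N => ∑ j : Fin N, ∑ k : Fin N,
        Γv j * Γv k * (fderiv ℝ G (Pjk j k z)) (Pjk j k w0))
      (∑ j : Fin N, ∑ k : Fin N, (Γv j * Γv k) •
        (((ContinuousLinearMap.apply ℝ ℝ (Pjk j k w0)).comp D).comp (Pjk j k)))
      (diagPh N a) := by
    apply HasFDerivAt.fun_sum
    intro j _
    apply HasFDerivAt.fun_sum
    intro k _
    exact (hterm j k).const_mul _
  have lhs_eq : hessOf (Fint N Γv g) (diagPh N a) (diagPh N b) (l, i)
      = ∑ j : Fin N, ∑ k : Fin N,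
          Γv j * Γv k * (D (Pjk j k (diagPh N b))) (Pjk j k w0) := by
    rw [hessOf, hess_coord _ _ hgradF, hEv.fderiv_eq, hsum.fderiv]
    simp [ContinuousLinearMap.sum_apply, ContinuousLinearMap.smul_apply, smul_eq_mul]
  rw [lhs_eq]
  have hPb : ∀ j k : Fin N, Pjk j k (diagPh N b) = ((b, b) : V2 × V2) := fun j k => rfl
  have hPw : ∀ j k : Fin N, Pjk j k w0
      = (((if j = l then ei else 0) : V2), ((if k = l then ei else 0) : V2)) := by
    intro j k
    rw [Pjk_apply, hw0def, comp2_single, comp2_single, heidef]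
  have hsplit : ∀ u v : V2, D (b, b) (u, v) = D (b, b) (u, 0) + D (b, b) (0, v) := by
    intro u v
    rw [← map_add]
    congr 1
    simp [Prod.ext_iff]
  have hz00 : D (b, b) ((0 : V2), (0 : V2)) = 0 := by
    have : ((0 : V2), (0 : V2)) = (0 : V2 × V2) := rfl
    rw [this, map_zero]
  have hval : ∀ j k : Fin N,
      (D (Pjk j k (diagPh N b))) (Pjk j k w0)
        = (if j = l then D (b, b) (ei, (0:V2)) else 0)
          + (if k = l then D (b, b) ((0:V2), ei) else 0) := by
    intro j k
    rw [hPb, hPw, hsplit]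
    congr 1
    · by_cases h : j = l <;> simp [h, hz00]
    · by_cases h : k = l <;> simp [h, hz00]
  have hXY : D (b, b) (ei, (0:V2)) + D (b, b) ((0:V2), ei) = D (b, b) (ei, ei) :=
    (hsplit ei ei).symm
  have h1 : ∀ j k : Fin N, Γv j * Γv k * (D (Pjk j k (diagPh N b))) (Pjk j k w0)
      = (if j = l then Γv j * Γv k * D (b, b) (ei, (0:V2)) else 0)
        + (if k = l then Γv j * Γv k * D (b, b) ((0:V2), ei) else 0) := by
    intro j k
    rw [hval]
    by_cases h : j = l <;> by_cases h' : k = l <;> simp [h, h'] <;> ring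
  have e1 : (∑ j : Fin N, ∑ k : Fin N,
        if j = l then Γv j * Γv k * D (b, b) (ei, (0:V2)) else 0)
      = Γv l * (∑ x : Fin N, Γv x) * D (b, b) (ei, (0:V2)) := by
    rw [Finset.sum_eq_single l]
    · simp only [eq_self_iff_true, if_true]
      rw [Finset.mul_sum, Finset.sum_mul]
    · intro c _ hc
      simp [hc]
    · intro h
      exact absurd (Finset.mem_univ l) h
  have e2 : (∑ j : Fin N, ∑ k : Fin N,
        if k = l then Γv j * Γv k * D (b, b) ((0:V2), ei) else 0)
      = (∑ x : Fin N, Γv x) * Γv l * D (b, b) ((0:V2), ei) := by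
    simp only [Finset.sum_ite_eq', Finset.mem_univ, if_true]
    rw [Finset.sum_mul, Finset.sum_mul]
  have key : (∑ j : Fin N, ∑ k : Fin N,
        Γv j * Γv k * (D (Pjk j k (diagPh N b))) (Pjk j k w0))
      = (∑ x : Fin N, Γv x) * Γv l * D (b, b) (ei, ei) := by
    simp only [h1, Finset.sum_add_distrib]
    rw [e1, e2, ← hXY]
    ring
  rw [key, show (mkPh fun p => Gtot N Γv * Γv p.1 * hessOf (fun x => g x x) a b p.2) (l, i)
    = Gtot N Γv * Γv l * hessOf (fun x => g x x) a b i from rfl, hhside,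
    show Gtot N Γv = ∑ x : Fin N, Γv x from rfl]
end
end

section
/- For r > 0 define M_r = [[cos(r²)+sin(r²), −2r],[sin(r²)²/r, cos(r²)−sin(r²)]] ∈ ℝ^{2×2}. Then: (i) with e₁ = (1,0), one has M_r e₁ = (1+r²)e₁ + o(r²) as r → 0⁺; (ii) for every r > 0 the characteristic polynomial of M_r is λ² − 2cos(r²)λ + 1 (in particular det M_r = 1), so the complex eigenvalues of M_r are exactly e^{ir²} and e^{−ir²}, and neither eigenvalue equals 1 + r² + o(r²) since e^{±ir²} = 1 ± ir² + o(r²). -/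
noncomputable section

open Real Set Asymptotics Polynomial Function
open scoped Topology
open scoped BigOperators RealInnerProductSpace

/-- The symplectic family `M_r` of Example 4.3. -/
def Mex (r : ℝ) : Matrix (Fin 2) (Fin 2) ℝ :=
  !![Real.cos (r ^ 2) + Real.sin (r ^ 2), -2 * r;
     (Real.sin (r ^ 2)) ^ 2 / r, Real.cos (r ^ 2) - Real.sin (r ^ 2)]


private lemma charpoly_fin_two' {R : Type*} [CommRing R] (M : Matrix (Fin 2) (Fin 2) R) :
    M.charpoly = X ^ 2 - C M.trace * X + C M.det := by
  rw [Matrix.charpoly, Matrix.det_fin_two, Matrix.trace_fin_two, Matrix.det_fin_two]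
  simp [Matrix.charmatrix_apply_eq, Matrix.charmatrix_apply_ne]
  ring

private lemma mex_det (r : ℝ) (hr : 0 < r) : (Mex r).det = 1 := by
  have h := Real.sin_sq_add_cos_sq (r ^ 2)
  rw [Mex, Matrix.det_fin_two_of]
  field_simp
  nlinarith [h]

private lemma mex_charpolyC (r : ℝ) (hr : 0 < r) :
    ((Mex r).map (algebraMap ℝ ℂ)).charpoly =
      X ^ 2 - C ((2 * Real.cos (r ^ 2) : ℝ) : ℂ) * X + 1 := by
  rw [charpoly_fin_two']
  have hdet : ((Mex r).map (algebraMap ℝ ℂ)).det = 1 := by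
    have : ((Mex r).map (algebraMap ℝ ℂ)).det = algebraMap ℝ ℂ (Mex r).det :=
      ((algebraMap ℝ ℂ).map_det (Mex r)).symm
    rw [this, mex_det r hr, map_one]
  have htr : ((Mex r).map (algebraMap ℝ ℂ)).trace = ((2 * Real.cos (r ^ 2) : ℝ) : ℂ) := by
    rw [Matrix.trace_fin_two]
    simp [Mex, Matrix.map_apply]
    ring
  rw [hdet, htr, map_one]

private lemma root_iff' (θ : ℝ) (μ : ℂ) :
    ((X : Polynomial ℂ) ^ 2 - C ((2 * Real.cos θ : ℝ) : ℂ) * X + 1).IsRoot μ ↔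
      μ = Complex.exp (Complex.I * (θ : ℂ)) ∨ μ = Complex.exp (-(Complex.I * (θ : ℂ))) := by
  set a := Complex.exp (Complex.I * (θ : ℂ)) with ha
  set b := Complex.exp (-(Complex.I * (θ : ℂ))) with hb
  have hab : a * b = 1 := by
    rw [ha, hb, ← Complex.exp_add, add_neg_cancel, Complex.exp_zero]
  have hsum : a + b = ((2 * Real.cos θ : ℝ) : ℂ) := by
    have h1 : Complex.I * (θ : ℂ) = (θ : ℂ) * Complex.I := by ring
    have h2 : -(Complex.I * (θ : ℂ)) = ((-θ : ℝ) : ℂ) * Complex.I := by push_cast; ring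
    rw [ha, hb, h2, h1, Complex.exp_mul_I, Complex.exp_mul_I]
    push_cast [Complex.ofReal_cos, Complex.ofReal_sin]
    rw [Complex.cos_neg, Complex.sin_neg]
    ring
  have key : Polynomial.eval μ ((X : Polynomial ℂ) ^ 2 - C ((2 * Real.cos θ : ℝ) : ℂ) * X + 1)
      = (μ - a) * (μ - b) := by
    simp only [eval_add, eval_sub, eval_mul, eval_pow, eval_X, eval_C, eval_one]
    rw [← hsum, ← hab]; ring
  rw [IsRoot, key, mul_eq_zero, sub_eq_zero, sub_eq_zero]

private lemma tend_sq' : Filter.Tendsto (fun r : ℝ => r ^ 2) (𝓝[>] 0) (𝓝 0) := by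
  have : Filter.Tendsto (fun r : ℝ => r ^ 2) (𝓝 (0:ℝ)) (𝓝 ((0:ℝ) ^ 2)) :=
    (continuous_pow 2).tendsto 0
  simpa using this.mono_left nhdsWithin_le_nhds

private lemma o_cos_sin' : (fun r : ℝ => Real.cos (r ^ 2) + Real.sin (r ^ 2) - (1 + r ^ 2))
    =o[𝓝[>] (0 : ℝ)] fun r => r ^ 2 := by
  have hd : HasDerivAt (fun x : ℝ => Real.cos x + Real.sin x) 1 0 := by
    exact ((Real.hasDerivAt_cos 0).add (Real.hasDerivAt_sin 0)).congr_deriv (by simp)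
  have h := (hasDerivAt_iff_isLittleO.mp hd)
  simp only [Real.cos_zero, Real.sin_zero, sub_zero, smul_eq_mul, mul_one] at h
  have h2 := h.comp_tendsto tend_sq'
  simpa [Function.comp_def, sub_add_eq_sub_sub] using h2

private lemma o_sin_sq' : (fun r : ℝ => (Real.sin (r ^ 2)) ^ 2 / r)
    =o[𝓝[>] (0 : ℝ)] fun r => r ^ 2 := by
  rw [isLittleO_iff]
  intro c hc
  have hmem : Ioo (0:ℝ) (min c 1) ∈ 𝓝[>] (0:ℝ) :=
    Ioo_mem_nhdsGT_of_mem ⟨le_refl _, lt_min hc one_pos⟩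
  filter_upwards [hmem] with r hr
  obtain ⟨hr0, hr1⟩ := hr
  have hrc : r < c := lt_of_lt_of_le hr1 (min_le_left _ _)
  have hr1' : r < 1 := lt_of_lt_of_le hr1 (min_le_right _ _)
  have hx : 0 < r ^ 2 := by positivity
  have hsin_pos : 0 < Real.sin (r ^ 2) := by
    apply Real.sin_pos_of_pos_of_lt_pi hx
    nlinarith [Real.pi_gt_three]
  have hsin_lt : Real.sin (r ^ 2) < r ^ 2 := Real.sin_lt hx
  have h1 : (Real.sin (r ^ 2)) ^ 2 / r ≤ r ^ 3 := by
    rw [div_le_iff₀ hr0]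
    nlinarith
  have h2 : r ^ 3 ≤ c * r ^ 2 := by nlinarith
  rw [Real.norm_eq_abs, Real.norm_eq_abs, abs_of_nonneg (by positivity),
    abs_of_nonneg (by positivity)]
  linarith

private lemma o_exp' (c : ℂ) (hc : ‖c‖ = 1) :
    (fun r : ℝ => Complex.exp (c * ((r ^ 2 : ℝ) : ℂ)) - 1 -
      c * ((r ^ 2 : ℝ) : ℂ)) =o[𝓝[>] (0 : ℝ)] fun r : ℝ => r ^ 2 := by
  have hd : HasDerivAt Complex.exp 1 0 := by simpa using Complex.hasDerivAt_exp 0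
  have h := hasDerivAt_iff_isLittleO.mp hd
  simp only [Complex.exp_zero, sub_zero, smul_eq_mul, mul_one] at h
  have ht : Filter.Tendsto (fun r : ℝ => c * ((r ^ 2 : ℝ) : ℂ)) (𝓝[>] 0) (𝓝 0) := by
    have : Filter.Tendsto (fun r : ℝ => c * ((r ^ 2 : ℝ) : ℂ)) (𝓝 (0:ℝ))
        (𝓝 (c * ((0:ℝ)^2 : ℝ))) := (Continuous.tendsto (by continuity) 0)
    simpa using this.mono_left nhdsWithin_le_nhds
  have h2 := h.comp_tendsto ht
  have h3 : (fun r : ℝ => c * ((r ^ 2 : ℝ) : ℂ)) =O[𝓝[>] (0:ℝ)] fun r => r ^ 2 := by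
    apply Asymptotics.isBigO_of_le
    intro r
    simp [hc, abs_of_nonneg (sq_nonneg r)]
  exact (h2.trans_isBigO h3).congr' (by rfl) (by rfl)

private lemma part1' : ((fun r : ℝ => Matrix.mulVec (Mex r) ![1, 0] - ![1 + r ^ 2, 0])
      =o[𝓝[>] (0 : ℝ)] fun r => r ^ 2) := by
  rw [isLittleO_pi]
  intro i
  fin_cases i
  · simpa [Mex, Matrix.mulVec, dotProduct, Fin.sum_univ_two] using o_cos_sin'
  · simpa [Mex, Matrix.mulVec, dotProduct, Fin.sum_univ_two] using o_sin_sq'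

private lemma part5' : ¬ ∃ lam : ℝ → ℂ,
        (∀ r ∈ Ioo (0 : ℝ) 1, ((Mex r).map (algebraMap ℝ ℂ)).charpoly.IsRoot (lam r)) ∧
        (fun r : ℝ => lam r - 1 - ((r ^ 2 : ℝ) : ℂ)) =o[𝓝[>] (0 : ℝ)] fun r : ℝ => r ^ 2 := by
  rintro ⟨lam, hroot, ho⟩
  have hbound := isLittleO_iff.mp ho (by norm_num : (0:ℝ) < 1/2)
  have hIoo : Ioo (0:ℝ) 1 ∈ 𝓝[>] (0:ℝ) := Ioo_mem_nhdsGT_of_mem ⟨le_refl _, one_pos⟩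
  have hF : ∀ᶠ r in 𝓝[>] (0:ℝ), False := by
    filter_upwards [hbound, hIoo] with r hb hr
    have hr0 := hr.1
    have hr1 := hr.2
    have hx : 0 < r ^ 2 := by positivity
    have hx1 : r ^ 2 < 1 := by nlinarith
    have hsin_pos : 0 < Real.sin (r ^ 2) := by
      apply Real.sin_pos_of_pos_of_lt_pi hx
      nlinarith [Real.pi_gt_three]
    have hroot' := hroot r hr
    rw [mex_charpolyC r hr0, root_iff'] at hroot'
    have him : |(lam r).im| = Real.sin (r ^ 2) := by
      rcases hroot' with h | h
      · rw [h, mul_comm, Complex.exp_ofReal_mul_I_im]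
        exact abs_of_pos hsin_pos
      · rw [h, show -(Complex.I * ((r^2:ℝ):ℂ)) = ((-(r^2) : ℝ) : ℂ) * Complex.I by
          push_cast; ring, Complex.exp_ofReal_mul_I_im, Real.sin_neg, abs_neg]
        exact abs_of_pos hsin_pos
    have him2 : (lam r - 1 - ((r^2:ℝ):ℂ)).im = (lam r).im := by
      simp only [Complex.sub_im, Complex.one_im, Complex.ofReal_im, sub_zero]
    have h3 : |(lam r).im| ≤ ‖lam r - 1 - ((r^2:ℝ):ℂ)‖ := by
      rw [← him2]
      exact Complex.abs_im_le_norm _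
    have h4 : ‖(r:ℝ)^2‖ = r ^ 2 := by
      rw [Real.norm_eq_abs, abs_of_pos hx]
    have hcube := Real.sin_gt_sub_cube hx
    rw [him] at h3
    rw [h4] at hb
    have h1 : r ^ 2 * r ^ 2 < 1 := by nlinarith
    have hx3 : (r ^ 2) ^ 3 < r ^ 2 := by nlinarith [mul_lt_of_lt_one_right hx h1]
    have := h3.trans hb
    linarith
  obtain ⟨r, hr⟩ := hF.exists
  exact hr

/-- Example 4.3: `M_r e₁ = (1+r²)e₁ + o(r²)`, but the characteristic polynomial of
`M_r` is `λ² − 2cos(r²)λ + 1` (in particular `det M_r = 1`), so the eigenvalues of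
`M_r` are exactly `e^{±ir²} = 1 ± ir² + o(r²)` and no eigenvalue is of the form
`1 + r² + o(r²)`. -/
theorem eigenvalue_counterexample :
    ((fun r : ℝ => Matrix.mulVec (Mex r) ![1, 0] - ![1 + r ^ 2, 0])
      =o[𝓝[>] (0 : ℝ)] fun r => r ^ 2) ∧
    (∀ r : ℝ, 0 < r →
      ((Mex r).map (algebraMap ℝ ℂ)).charpoly =
        Polynomial.X ^ 2 -
          Polynomial.C ((2 * Real.cos (r ^ 2) : ℝ) : ℂ) * Polynomial.X + 1 ∧
      (Mex r).det = 1 ∧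
      (∀ μ : ℂ, ((Mex r).map (algebraMap ℝ ℂ)).charpoly.IsRoot μ ↔
        μ = Complex.exp (Complex.I * ((r ^ 2 : ℝ) : ℂ)) ∨
        μ = Complex.exp (-(Complex.I * ((r ^ 2 : ℝ) : ℂ))))) ∧
    ((fun r : ℝ => Complex.exp (Complex.I * ((r ^ 2 : ℝ) : ℂ)) - 1 -
        Complex.I * ((r ^ 2 : ℝ) : ℂ)) =o[𝓝[>] (0 : ℝ)] fun r : ℝ => r ^ 2) ∧
    ((fun r : ℝ => Complex.exp (-(Complex.I * ((r ^ 2 : ℝ) : ℂ))) - 1 +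
        Complex.I * ((r ^ 2 : ℝ) : ℂ)) =o[𝓝[>] (0 : ℝ)] fun r : ℝ => r ^ 2) ∧
    ¬ ∃ lam : ℝ → ℂ,
        (∀ r ∈ Ioo (0 : ℝ) 1, ((Mex r).map (algebraMap ℝ ℂ)).charpoly.IsRoot (lam r)) ∧
        (fun r : ℝ => lam r - 1 - ((r ^ 2 : ℝ) : ℂ)) =o[𝓝[>] (0 : ℝ)] fun r : ℝ => r ^ 2 := by
  refine ⟨part1', fun r hr => ⟨mex_charpolyC r hr, mex_det r hr, fun μ => by
    rw [mex_charpolyC r hr]; exact root_iff' _ μ⟩, ?_, ?_, part5'⟩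
  · exact o_exp' Complex.I (by simp)
  · simpa [neg_mul, sub_neg_eq_add] using o_exp' (-Complex.I) (by simp)

end
end
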